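/- For every ε > 0 there exist r₀ = O(1/ε³) such that for every even r ≥ r₀ there are N and γ > 0 with: if K is a graph on k ≥ N vertices with at least (1-γ)·C(k,2) edges whose edges are 2-colored red/blue with at least ε·C(k,2) edges of each color, then K contains r vertices spanning a complete graph K_r having at least r blue edges and at least r red edges. -/

import Mathlib

open Finset

lemma greedy_extend {k : ℕ} (K : SimpleGraph (Fin k)) [DecidableRel K.Adj] (b : ℕ)
    (Cl : Finset (Fin k))
    (hCl : ∀ v ∈ Cl, (univ.filter fun w => w ≠ v ∧ ¬ K.Adj v w).card ≤ b) :
    ∀ (n : ℕ) (s P : Finset (Fin k)), s ⊆ Cl → P ⊆ Cl → K.IsClique ↑s →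
      (s.card + n) * (b+1) + n ≤ P.card →
      ∃ s', s ⊆ s' ∧ s'.card = s.card + n ∧ K.IsClique ↑s' ∧ s' ⊆ Cl ∧ s' \ s ⊆ P := by
  intro n
  induction n with
  | zero => intro s P hs hP hcl _; exact ⟨s, Finset.Subset.refl s, by simp, hcl, hs, by simp⟩
  | succ n ih =>
    intro s P hs hP hcl hcard
    set nn : Fin k → Finset (Fin k) := fun v => univ.filter fun w => w ≠ v ∧ ¬ K.Adj v w with hnn
    have hpool : (P \ (s ∪ s.biUnion nn)).Nonempty := by
      have h1 : (s ∪ s.biUnion nn).card ≤ s.card * (b+1) := by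
        calc (s ∪ s.biUnion nn).card ≤ s.card + (s.biUnion nn).card := Finset.card_union_le _ _
          _ ≤ s.card + ∑ u ∈ s, (nn u).card := by
              exact Nat.add_le_add_left (Finset.card_biUnion_le) _
          _ ≤ s.card + ∑ u ∈ s, b := by
              refine Nat.add_le_add_left (Finset.sum_le_sum fun u hu => hCl u (hs hu)) _
          _ = s.card * (b+1) := by rw [Finset.sum_const, smul_eq_mul]; ring
      have h2 : (s ∪ s.biUnion nn).card < P.card := by
        calc (s ∪ s.biUnion nn).card ≤ s.card * (b+1) := h1
          _ < (s.card + (n+1)) * (b+1) + (n+1) := by nlinarith [Nat.zero_le (s.card)]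
          _ ≤ P.card := hcard
      rw [← Finset.card_pos]
      have h3 : P.card ≤ (P \ (s ∪ s.biUnion nn)).card + (s ∪ s.biUnion nn).card := by
        calc P.card ≤ (P \ (s ∪ s.biUnion nn) ∪ (s ∪ s.biUnion nn)).card := by
              apply Finset.card_le_card; intro x hx
              by_cases hx2 : x ∈ s ∪ s.biUnion nn
              · exact Finset.mem_union_right _ hx2
              · exact Finset.mem_union_left _ (Finset.mem_sdiff.2 ⟨hx, hx2⟩)
          _ ≤ _ := Finset.card_union_le _ _
      omega
    obtain ⟨v, hv⟩ := hpool
    rw [Finset.mem_sdiff, Finset.mem_union, not_or] at hv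
    obtain ⟨hvP, hvs, hvnn⟩ := hv
    have hadj : ∀ u ∈ s, K.Adj u v := by
      intro u hu
      have : v ∉ nn u := fun h => hvnn (Finset.mem_biUnion.2 ⟨u, hu, h⟩)
      rw [hnn] at this
      simp only [Finset.mem_filter, Finset.mem_univ, true_and, not_and, not_not] at this
      have hne : v ≠ u := fun h => hvs (h ▸ hu)
      exact this hne
    have hclique' : K.IsClique ↑(insert v s) := by
      rw [Finset.coe_insert]
      exact hcl.insert fun u hu _ => (hadj u hu).symm
    have hns : v ∉ s := hvs
    obtain ⟨s', h1, h2, h3, h4, h5⟩ := ih (insert v s) (P.erase v)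
      (Finset.insert_subset (hP hvP) hs)
      ((Finset.erase_subset _ _).trans hP) hclique'
      (by rw [Finset.card_insert_of_notMem hns, Finset.card_erase_of_mem hvP]
          have he : (s.card+1+n)*(b+1) = (s.card+(n+1))*(b+1) := by ring
          omega)
    refine ⟨s', (Finset.subset_insert _ _).trans h1, ?_, h3, h4, ?_⟩
    · rw [h2, Finset.card_insert_of_notMem hns]; omega
    · intro x hx
      rw [Finset.mem_sdiff] at hx
      by_cases hxv : x = v
      · exact hxv ▸ hvP
      · have : x ∈ s' \ insert v s := Finset.mem_sdiff.2 ⟨hx.1, by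
          simp only [Finset.mem_insert, not_or]; exact ⟨hxv, hx.2⟩⟩
        exact (Finset.erase_subset _ _) (h5 this)


section helpers
variable {V : Type*} [Fintype V]

private lemma sum_const_card (x : ℕ) : ∑ _c : V, x = Fintype.card V * x := by
  rw [Finset.sum_const, Finset.card_univ, smul_eq_mul]

lemma card2A (p : V → Prop) [DecidablePred p] :
    ((univ : Finset (V × V)).filter fun x => p x.1).card
      = (univ.filter p).card * Fintype.card V := by
  rw [Finset.card_filter, Finset.card_filter, Fintype.sum_prod_type, Finset.sum_mul]
  apply Finset.sum_congr rfl; intro a _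
  simp [Finset.sum_const, Finset.card_univ, mul_comm, apply_ite Finset.card]

lemma card2B (p : V → Prop) [DecidablePred p] :
    ((univ : Finset (V × V)).filter fun x => p x.2).card
      = (univ.filter p).card * Fintype.card V := by
  rw [Finset.card_filter, Finset.card_filter, Fintype.sum_prod_type, Finset.sum_comm,
    Finset.sum_mul]
  apply Finset.sum_congr rfl; intro a _
  simp [Finset.sum_const, Finset.card_univ, mul_comm, apply_ite Finset.card]

lemma cardA (p : V → V → Prop) [∀ a b, Decidable (p a b)] :
    ((univ : Finset (V × V × V)).filter fun t => p t.1 t.2.1).card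
      = ((univ : Finset (V × V)).filter fun x => p x.1 x.2).card * Fintype.card V := by
  rw [Finset.card_filter, Finset.card_filter, Fintype.sum_prod_type, Finset.sum_mul,
    Fintype.sum_prod_type]
  apply Finset.sum_congr rfl; intro a _
  rw [Fintype.sum_prod_type]
  apply Finset.sum_congr rfl; intro b _
  simp [Finset.sum_const, Finset.card_univ, mul_comm, apply_ite Finset.card]

lemma cardB (p : V → V → Prop) [∀ a b, Decidable (p a b)] :
    ((univ : Finset (V × V × V)).filter fun t => p t.1 t.2.2).card
      = ((univ : Finset (V × V)).filter fun x => p x.1 x.2).card * Fintype.card V := by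
  rw [Finset.card_filter, Finset.card_filter, Fintype.sum_prod_type, Finset.sum_mul,
    Fintype.sum_prod_type]
  apply Finset.sum_congr rfl; intro a _
  rw [Fintype.sum_prod_type, Finset.sum_comm]
  apply Finset.sum_congr rfl; intro c _
  simp [Finset.sum_const, Finset.card_univ, mul_comm, apply_ite Finset.card]

lemma cardC (p : V → V → Prop) [∀ a b, Decidable (p a b)] :
    ((univ : Finset (V × V × V)).filter fun t => p t.2.1 t.2.2).card
      = ((univ : Finset (V × V)).filter fun x => p x.1 x.2).card * Fintype.card V := by
  rw [Finset.card_filter, Finset.card_filter, Fintype.sum_prod_type]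
  simp [Finset.sum_const, Finset.card_univ, mul_comm, apply_ite Finset.card]

end helpers

-- sum of "color degrees" equals twice the number of color edges
lemma color_degree_sum {k : ℕ} (K : SimpleGraph (Fin k)) (C : Finset (Sym2 (Fin k)))
    (hC : ∀ e ∈ C, e ∈ K.edgeSet) :
    ∑ v : Fin k, (univ.filter fun w => s(v,w) ∈ C).card = 2 * C.card := by
  classical
  set Rg := SimpleGraph.fromEdgeSet (↑C : Set (Sym2 (Fin k))) with hRg
  have hadj : ∀ v w : Fin k, Rg.Adj v w ↔ s(v,w) ∈ C := by
    intro v w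
    rw [hRg, SimpleGraph.fromEdgeSet_adj]
    simp only [Finset.mem_coe]
    constructor
    · exact fun h => h.1
    · intro h
      refine ⟨h, ?_⟩
      have := SimpleGraph.not_isDiag_of_mem_edgeSet K (hC _ h)
      intro hvw; exact this (by rw [hvw]; exact Sym2.isDiag_iff_proj_eq.mpr rfl)
  have hedge : Rg.edgeSet = (↑C : Set (Sym2 (Fin k))) := by
    rw [hRg, SimpleGraph.edgeSet_fromEdgeSet]
    ext e
    simp only [Set.mem_diff, Set.mem_setOf_eq, Finset.mem_coe, and_iff_left_iff_imp]
    intro he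
    exact SimpleGraph.not_isDiag_of_mem_edgeSet K (hC _ he)
  have hdeg : ∀ v, (univ.filter fun w => s(v,w) ∈ C).card = Rg.degree v := by
    intro v
    rw [SimpleGraph.degree, SimpleGraph.neighborFinset_eq_filter]
    congr 1
    apply Finset.filter_congr
    intro w _
    simp [hadj v w]
  have hcard : ∀ (inst : Fintype Rg.edgeSet), (@SimpleGraph.edgeFinset _ Rg inst).card = C.card := by
    intro inst
    rw [← Set.ncard_coe_finset, SimpleGraph.coe_edgeFinset, hedge, Set.ncard_coe_finset]
  have h1 : ∑ v : Fin k, (univ.filter fun w => s(v,w) ∈ C).card = ∑ v : Fin k, Rg.degree v := by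
    simp [hdeg]
  rw [h1, Rg.sum_degrees_eq_twice_card_edges, hcard]

lemma find_triple {k : ℕ} (K : SimpleGraph (Fin k)) [DecidableRel K.Adj] (hk : 0 < k)
    (C : Finset (Sym2 (Fin k))) (hC : ∀ e ∈ C, e ∈ K.edgeSet)
    (DF : Finset (Fin k)) (q : ℝ) (hq : 0 ≤ q)
    (hbig : q * (k:ℝ)^3
        + 3*(k:ℝ)^2 * (((univ : Finset (Fin k × Fin k)).filter fun p : Fin k × Fin k => ¬ K.Adj p.1 p.2).card : ℝ)
        + 3*(k:ℝ)^3 * (DF.card : ℝ)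
        < (2 * C.card : ℝ)^3 / (k:ℝ)^2) :
    ∃ a b c : Fin k, K.Adj a b ∧ K.Adj a c ∧ K.Adj b c ∧ a ∉ DF ∧ b ∉ DF ∧ c ∉ DF ∧
      q ≤ ((univ.filter fun v => s(v,a) ∈ C ∧ s(v,b) ∈ C ∧ s(v,c) ∈ C).card : ℝ) := by
  classical
  set Q : ℕ := ((univ : Finset (Fin k × Fin k)).filter fun p : Fin k × Fin k => ¬ K.Adj p.1 p.2).card with hQ
  set d : Fin k → ℕ := fun v => (univ.filter fun w => s(v,w) ∈ C).card with hd
  have hsum : ∑ v : Fin k, d v = 2 * C.card := color_degree_sum K C hC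
  -- power mean
  have hpow : (2 * C.card : ℝ)^3 / (k:ℝ)^2 ≤ ∑ v : Fin k, (d v : ℝ)^3 := by
    have := pow_sum_div_card_le_sum_pow (s := (univ : Finset (Fin k)))
      (f := fun v => (d v : ℝ)) (fun i _ => by positivity) 2
    simp only [Finset.card_univ, Fintype.card_fin] at this
    have hcast : ∑ v : Fin k, (d v : ℝ) = (2 * C.card : ℝ) := by
      rw [← Nat.cast_sum]
      rw [hsum]; push_cast; ring
    rw [hcast] at this
    exact this
  -- good triples
  set good : Fin k × Fin k × Fin k → Prop := fun t =>
    K.Adj t.1 t.2.1 ∧ K.Adj t.1 t.2.2 ∧ K.Adj t.2.1 t.2.2 ∧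
    t.1 ∉ DF ∧ t.2.1 ∉ DF ∧ t.2.2 ∉ DF with hgood
  set G : Finset (Fin k × Fin k × Fin k) := univ.filter good with hG
  set common : Fin k × Fin k × Fin k → ℕ := fun t =>
    (univ.filter fun v => s(v,t.1) ∈ C ∧ s(v,t.2.1) ∈ C ∧ s(v,t.2.2) ∈ C).card with hcommon
  set Bad : ℕ := (univ.filter fun t : Fin k × Fin k × Fin k => ¬ good t).card with hBad
  -- per-vertex bound
  have hv3 : ∀ v : Fin k, (d v)^3 ≤
      (G.filter fun t => s(v,t.1) ∈ C ∧ s(v,t.2.1) ∈ C ∧ s(v,t.2.2) ∈ C).card + Bad := by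
    intro v
    set Nv : Finset (Fin k) := univ.filter fun w => s(v,w) ∈ C with hNv
    have hcube : (Nv ×ˢ Nv ×ˢ Nv).card = (d v)^3 := by
      rw [Finset.card_product, Finset.card_product]; rw [hd]; ring
    have hsplit := Finset.card_filter_add_card_filter_not
      (s := Nv ×ˢ Nv ×ˢ Nv) (p := good)
    have h1 : ((Nv ×ˢ Nv ×ˢ Nv).filter good).card ≤
        (G.filter fun t => s(v,t.1) ∈ C ∧ s(v,t.2.1) ∈ C ∧ s(v,t.2.2) ∈ C).card := by
      apply Finset.card_le_card
      intro t ht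
      rw [Finset.mem_filter] at ht
      rw [Finset.mem_product, Finset.mem_product] at ht
      rw [Finset.mem_filter, hG, Finset.mem_filter]
      obtain ⟨⟨ht1, ht2, ht3⟩, hg⟩ := ht
      rw [hNv, Finset.mem_filter] at ht1 ht2 ht3
      exact ⟨⟨Finset.mem_univ _, hg⟩, ht1.2, ht2.2, ht3.2⟩
    have h2 : ((Nv ×ˢ Nv ×ˢ Nv).filter fun t => ¬ good t).card ≤ Bad := by
      apply Finset.card_le_card
      intro t ht
      rw [Finset.mem_filter] at ht
      exact Finset.mem_filter.2 ⟨Finset.mem_univ _, ht.2⟩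
    omega
  -- swap double count
  have hswap : ∑ v : Fin k, (G.filter fun t => s(v,t.1) ∈ C ∧ s(v,t.2.1) ∈ C ∧ s(v,t.2.2) ∈ C).card
      = ∑ t ∈ G, common t := by
    simp only [Finset.card_filter, hcommon]
    exact Finset.sum_comm
  -- bound on bad triples
  have hBadle : Bad ≤ 3*(Q*k) + 3*(DF.card * (k*k)) := by
    have hsub : (univ.filter fun t : Fin k × Fin k × Fin k => ¬ good t) ⊆
        ((univ.filter fun t : Fin k × Fin k × Fin k => ¬ K.Adj t.1 t.2.1) ∪
         (univ.filter fun t : Fin k × Fin k × Fin k => ¬ K.Adj t.1 t.2.2) ∪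
         (univ.filter fun t : Fin k × Fin k × Fin k => ¬ K.Adj t.2.1 t.2.2) ∪
         (univ.filter fun t : Fin k × Fin k × Fin k => t.1 ∈ DF) ∪
         (univ.filter fun t : Fin k × Fin k × Fin k => t.2.1 ∈ DF) ∪
         (univ.filter fun t : Fin k × Fin k × Fin k => t.2.2 ∈ DF)) := by
      intro t ht
      simp only [Finset.mem_filter, Finset.mem_univ, true_and, hgood] at ht
      simp only [Finset.mem_union, Finset.mem_filter, Finset.mem_univ, true_and]
      tauto
    have hcard := Finset.card_le_card hsub
    have hu : ∀ (A B : Finset (Fin k × Fin k × Fin k)), (A ∪ B).card ≤ A.card + B.card :=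
      fun A B => Finset.card_union_le A B
    have e1 : ((univ : Finset (Fin k × Fin k × Fin k)).filter fun t => ¬ K.Adj t.1 t.2.1).card = Q * k := by
      have := cardA (V := Fin k) (fun a b => ¬ K.Adj a b)
      simpa [Fintype.card_fin] using this
    have e2 : ((univ : Finset (Fin k × Fin k × Fin k)).filter fun t => ¬ K.Adj t.1 t.2.2).card = Q * k := by
      have := cardB (V := Fin k) (fun a b => ¬ K.Adj a b)
      simpa [Fintype.card_fin] using this
    have e3 : ((univ : Finset (Fin k × Fin k × Fin k)).filter fun t => ¬ K.Adj t.2.1 t.2.2).card = Q * k := by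
      have := cardC (V := Fin k) (fun a b => ¬ K.Adj a b)
      simpa [Fintype.card_fin] using this
    have hDF : (univ.filter (fun v : Fin k => v ∈ DF)).card = DF.card := by
      congr 1
      exact Finset.filter_univ_mem DF
    have e4 : ((univ : Finset (Fin k × Fin k × Fin k)).filter fun t => t.1 ∈ DF).card = DF.card * (k*k) := by
      have h1 := cardA (V := Fin k) (fun a _ => a ∈ DF)
      have h2 := card2A (V := Fin k) (fun a => a ∈ DF)
      simp only [Fintype.card_fin] at h1 h2
      rw [h1, h2, hDF]; ring
    have e5 : ((univ : Finset (Fin k × Fin k × Fin k)).filter fun t => t.2.1 ∈ DF).card = DF.card * (k*k) := by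
      have h1 := cardA (V := Fin k) (fun _ b => b ∈ DF)
      have h2 := card2B (V := Fin k) (fun a => a ∈ DF)
      simp only [Fintype.card_fin] at h1 h2
      rw [h1, h2, hDF]; ring
    have e6 : ((univ : Finset (Fin k × Fin k × Fin k)).filter fun t => t.2.2 ∈ DF).card = DF.card * (k*k) := by
      have h1 := cardC (V := Fin k) (fun _ b => b ∈ DF)
      have h2 := card2B (V := Fin k) (fun a => a ∈ DF)
      simp only [Fintype.card_fin] at h1 h2
      rw [h1, h2, hDF]; ring
    calc Bad ≤ _ := hcard
      _ ≤ 3*(Q*k) + 3*(DF.card * (k*k)) := by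
        refine le_trans (hu _ _) ?_
        have := hu ((univ.filter fun t : Fin k × Fin k × Fin k => ¬ K.Adj t.1 t.2.1) ∪
          (univ.filter fun t : Fin k × Fin k × Fin k => ¬ K.Adj t.1 t.2.2) ∪
          (univ.filter fun t : Fin k × Fin k × Fin k => ¬ K.Adj t.2.1 t.2.2) ∪
          (univ.filter fun t : Fin k × Fin k × Fin k => t.1 ∈ DF))
          (univ.filter fun t : Fin k × Fin k × Fin k => t.2.1 ∈ DF)
        calc _ ≤ _ := Nat.add_le_add (le_trans (hu _ _) (Nat.add_le_add (le_trans (hu _ _)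
              (Nat.add_le_add (le_trans (hu _ _) (Nat.add_le_add (le_trans (hu _ _)
              (Nat.add_le_add le_rfl le_rfl)) le_rfl)) le_rfl)) le_rfl)) le_rfl
          _ ≤ 3*(Q*k) + 3*(DF.card * (k*k)) := by
              rw [e1, e2, e3, e4, e5, e6]; omega
  -- combine in ℝ
  have hmain : q * (k:ℝ)^3 < ∑ t ∈ G, (common t : ℝ) := by
    have h1 : (∑ v : Fin k, (d v)^3 : ℕ) ≤ (∑ t ∈ G, common t) + k * Bad := by
      calc (∑ v : Fin k, (d v)^3 : ℕ)
          ≤ ∑ v : Fin k, ((G.filter fun t => s(v,t.1) ∈ C ∧ s(v,t.2.1) ∈ C ∧ s(v,t.2.2) ∈ C).card + Bad) :=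
            Finset.sum_le_sum fun v _ => hv3 v
        _ = (∑ t ∈ G, common t) + k * Bad := by
            rw [Finset.sum_add_distrib, hswap, Finset.sum_const, Finset.card_univ,
              Fintype.card_fin, smul_eq_mul]
    have h1R : (∑ v : Fin k, ((d v):ℝ)^3) ≤ (∑ t ∈ G, (common t : ℝ)) + (k:ℝ) * Bad := by
      have := h1
      have hcast : ((∑ v : Fin k, (d v)^3 : ℕ) : ℝ) ≤ (((∑ t ∈ G, common t) + k * Bad : ℕ) : ℝ) :=
        Nat.cast_le.2 this
      push_cast at hcast
      convert hcast using 2 <;> push_cast <;> ring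
    have h2 : ((Bad : ℕ) : ℝ) ≤ 3*(Q:ℝ)*k + 3*(DF.card:ℝ)*(k:ℝ)^2 := by
      have := (Nat.cast_le (α := ℝ)).2 hBadle
      push_cast at this
      nlinarith [this]
    have hk0 : (0:ℝ) < (k:ℝ) := by exact_mod_cast hk
    nlinarith [hpow, h1R, h2, hbig]
  obtain ⟨t, htG, htq⟩ : ∃ t ∈ G, q ≤ (common t : ℝ) := by
    by_contra hcon
    push_neg at hcon
    have hle : ∑ t ∈ G, (common t : ℝ) ≤ q * G.card := by
      calc ∑ t ∈ G, (common t:ℝ) ≤ ∑ _t ∈ G, q := Finset.sum_le_sum fun t ht => le_of_lt (hcon t ht)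
        _ = G.card * q := by rw [Finset.sum_const, nsmul_eq_mul]
        _ = q * G.card := mul_comm _ _
    have hG3 : (G.card : ℝ) ≤ (k:ℝ)^3 := by
      have hGle : G.card ≤ (univ : Finset (Fin k × Fin k × Fin k)).card :=
        Finset.card_le_card (Finset.filter_subset _ _)
      have h2 : ((univ : Finset (Fin k × Fin k × Fin k)).card) = k^3 := by
        simp [Finset.card_univ, Fintype.card_prod, Fintype.card_fin]; ring
      rw [h2] at hGle
      exact_mod_cast hGle
    nlinarith [mul_le_mul_of_nonneg_left hG3 hq]
  rw [hG, Finset.mem_filter] at htG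
  obtain ⟨-, h1, h2, h3, h4, h5, h6⟩ := htG
  exact ⟨t.1, t.2.1, t.2.2, h1, h2, h3, h4, h5, h6, htq⟩
private lemma clique6 {V : Type*} [DecidableEq V] (G : SimpleGraph V) (a b c d e f : V)
    (h1 : G.Adj a b) (h2 : G.Adj a c) (h3 : G.Adj a d) (h4 : G.Adj a e) (h5 : G.Adj a f)
    (h6 : G.Adj b c) (h7 : G.Adj b d) (h8 : G.Adj b e) (h9 : G.Adj b f)
    (h10 : G.Adj c d) (h11 : G.Adj c e) (h12 : G.Adj c f)
    (h13 : G.Adj d e) (h14 : G.Adj d f) (h15 : G.Adj e f) :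
    G.IsClique ↑({a,b,c,d,e,f} : Finset V) := by
  rw [SimpleGraph.isClique_iff]
  intro x hx y hy hxy
  rw [Finset.mem_coe, Finset.mem_insert, Finset.mem_insert, Finset.mem_insert,
    Finset.mem_insert, Finset.mem_insert, Finset.mem_singleton] at hx hy
  rcases hx with rfl|rfl|rfl|rfl|rfl|rfl <;> rcases hy with rfl|rfl|rfl|rfl|rfl|rfl <;>
    first
      | exact absurd rfl hxy
      | exact h1 | exact h1.symm | exact h2 | exact h2.symm | exact h3 | exact h3.symm
      | exact h4 | exact h4.symm | exact h5 | exact h5.symm | exact h6 | exact h6.symm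
      | exact h7 | exact h7.symm | exact h8 | exact h8.symm | exact h9 | exact h9.symm
      | exact h10 | exact h10.symm | exact h11 | exact h11.symm | exact h12 | exact h12.symm
      | exact h13 | exact h13.symm | exact h14 | exact h14.symm | exact h15 | exact h15.symm

private lemma arith_nnsum {γ kR E : ℝ} (hγ : 0 ≤ γ) (hk : 0 ≤ kR)
    (hE : (1-γ)*(kR*(kR-1)/2) ≤ E) : kR*kR - 2*E - kR ≤ γ*kR^2 := by nlinarith

private lemma arith_Q {γ kR E : ℝ} (hγ : 0 ≤ γ) (hk : 0 ≤ kR)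
    (hE : (1-γ)*(kR*(kR-1)/2) ≤ E) : kR*kR - 2*E ≤ kR + γ*kR^2 := by nlinarith

private lemma arith_dirty {D b1 γ rR e3 kR : ℝ} (hD : 0 ≤ D) (hr : 0 < rR) (he3 : 0 < e3)
    (hk : 0 < kR) (hγprod : γ * (2^40*(rR+1)^2) = e3) (hγ : 0 ≤ γ)
    (hDS : D * b1 ≤ γ * kR^2) (hb2 : e3 * kR / (2^20*rR) ≤ b1) :
    D * (2^20*rR) ≤ kR := by
  have h1 : D * (e3 * kR / (2^20*rR)) ≤ γ * kR^2 :=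
    le_trans (mul_le_mul_of_nonneg_left hb2 hD) hDS
  have h2 : D * (e3 * kR) ≤ γ * kR^2 * (2^20*rR) := by
    have h2a := mul_le_mul_of_nonneg_right h1 (show (0:ℝ) ≤ 2^20*rR by positivity)
    have h2b : D * (e3 * kR / (2^20*rR)) * (2^20*rR) = D * (e3 * kR) := by field_simp
    linarith [h2a, h2b.le, h2b.symm.le]
  have h3a : γ * kR^2 * (2^20*rR) * (2^20*rR) ≤ e3 * kR^2 := by
    rw [← hγprod]
    have key : (0:ℝ) ≤ γ*kR^2*rR := by positivity
    have key2 : (0:ℝ) ≤ γ*kR^2 := by positivity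
    nlinarith [key, key2]
  have h3 : D * (2^20*rR) * (e3 * kR) ≤ kR * (e3 * kR) := by
    have := mul_le_mul_of_nonneg_right h2 (show (0:ℝ) ≤ 2^20*rR by positivity)
    nlinarith [this, h3a, sq_nonneg kR, hk.le]
  exact le_of_mul_le_mul_right (by linarith [h3]) (mul_pos he3 hk)

private lemma arith_D60 {D rR e3 kR : ℝ} (hD : 0 ≤ D) (he3 : 0 ≤ e3)
    (hDR : D * (2^20*rR) ≤ kR) (hB1 : 2^40 ≤ e3 * rR) :
    D * 2^60 ≤ e3 * kR := by nlinarith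

set_option maxHeartbeats 1200000 in
private lemma arith_big {e3 ε' kR rR γ Q DF F : ℝ}
    (hε' : 0 < ε') (he3def : e3 = ε'^3) (he31 : e3 ≤ 1)
    (hk4 : 4 ≤ kR) (hr1 : 1 ≤ rR) (hγ : 0 ≤ γ)
    (hB2 : 2^20*(rR+1) ≤ e3*kR)
    (hγ40 : γ * 2^40 ≤ e3)
    (hQ : Q ≤ kR + γ*kR^2)
    (hQ0 : 0 ≤ Q) (hDF0 : 0 ≤ DF)
    (hDF : DF * 2^16 ≤ e3 * kR)
    (hF : ε'*(kR*(kR-1)/2) ≤ F) :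
    (e3*kR/2^10)*kR^3 + 3*kR^2*Q + 3*kR^3*DF < (2*F)^3/kR^2 := by
  subst he3def
  have he3 : 0 < ε'^3 := by positivity
  have hk : (0:ℝ) < kR := by linarith
  have hF2 : (3/4)*ε'*kR^2 ≤ 2*F := by
    nlinarith [mul_nonneg (mul_nonneg hε'.le hk.le) (show (0:ℝ) ≤ kR - 4 by linarith)]
  have hcube : ((3/4)*ε'*kR^2)^3 ≤ (2*F)^3 :=
    pow_le_pow_left₀ (by positivity) hF2 3
  have hRHS : ε'^3*kR^4/4 ≤ (2*F)^3/kR^2 := by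
    rw [le_div_iff₀ (by positivity)]
    nlinarith [hcube, mul_pos he3 (pow_pos hk 6)]
  have hek : (2:ℝ)^21 ≤ ε'^3 * kR := by nlinarith
  have ht2 : 3*kR^2*Q ≤ 3*kR^3 + 3*γ*kR^4 := by
    nlinarith [mul_le_mul_of_nonneg_left hQ (show (0:ℝ) ≤ 3*kR^2 by positivity)]
  have ht2a : 3*kR^3 ≤ ε'^3*kR^4*(3/2^21) := by
    nlinarith [mul_le_mul_of_nonneg_right hek (le_of_lt (pow_pos hk 3))]
  have ht2b : 3*γ*kR^4 ≤ ε'^3*kR^4*(3/2^40) := by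
    nlinarith [mul_le_mul_of_nonneg_right hγ40 (le_of_lt (pow_pos hk 4))]
  have ht3 : 3*kR^3*DF ≤ ε'^3*kR^4*(3/2^16) := by
    nlinarith [mul_le_mul_of_nonneg_right hDF (le_of_lt (pow_pos hk 3))]
  have hX : (0:ℝ) < ε'^3*kR^4 := by positivity
  linarith [hRHS, ht2, ht2a, ht2b, ht3, hX]

private lemma arith_pool {e3 kR rR b D T P L : ℝ}
    (he3 : 0 < e3) (he31 : e3 ≤ 1) (hk : 0 < kR) (hr : 1 ≤ rR)
    (hb0 : 0 ≤ b) (hD0 : 0 ≤ D)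
    (hB2 : 2^20*(rR+1) ≤ e3*kR) (hb : b*(2^20*rR) ≤ e3*kR)
    (hD : D*2^60 ≤ e3*kR) (hT : e3*kR/2^10 ≤ T) (hTP : T ≤ P + D)
    (hL : L ≤ rR*(b+1) + rR) : L ≤ P := by
  have h2 : 2^20 * rR ≤ e3*kR := by nlinarith
  nlinarith [hb, h2, hT, hTP, hD, hL]

private lemma arith_pool3 {e3 kR rR b D P L : ℝ}
    (he3 : 0 < e3) (he31 : e3 ≤ 1) (hk : 0 < kR) (hr : 1 ≤ rR)
    (hb0 : 0 ≤ b) (hD0 : 0 ≤ D)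
    (hB2 : 2^20*(rR+1) ≤ e3*kR) (hb : b*(2^20*rR) ≤ e3*kR)
    (hD : D*2^60 ≤ e3*kR) (hTP : kR ≤ P + D)
    (hL : L ≤ rR*(b+1) + rR) : L ≤ P := by
  have h2 : 2^20 * rR ≤ e3*kR := by nlinarith
  have h3 : e3*kR ≤ kR := by nlinarith
  nlinarith [hb, h2, h3, hTP, hD, hL]

private lemma arith_g40 {γ rR e3 : ℝ} (hγ : 0 ≤ γ) (hr : 0 ≤ rR)
    (hp : γ * (2^40*(rR+1)^2) = e3) : γ * 2^40 ≤ e3 := by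
  nlinarith [mul_nonneg hγ hr, mul_nonneg (mul_nonneg hγ hr) hr]

private lemma arith_shrink {D X : ℝ} (hD : 0 ≤ D) (h : D * 2^60 ≤ X) : D * 2^16 ≤ X := by
  nlinarith

private lemma arith_DF2 {D b e3 kR rR DF2 : ℝ} (hD0 : 0 ≤ D) (hb0 : 0 ≤ b)
    (hD : D*2^60 ≤ e3*kR) (hb : b*(2^20*rR) ≤ e3*kR) (hr : 1 ≤ rR)
    (hB2 : 2^20*(rR+1) ≤ e3*kR) (hDF2 : DF2 ≤ D + 3*b + 3) :
    DF2 * 2^16 ≤ e3 * kR := by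
  have h1 : b*2^20 ≤ e3*kR := by nlinarith [mul_nonneg hb0 (sub_nonneg.2 hr)]
  have h2 : (2:ℝ)^21 ≤ e3*kR := by nlinarith
  nlinarith [h1, h2, hD, hDF2, hD0, hb0]

set_option maxHeartbeats 2000000 in
theorem clique_with_both_colors (ε : ℝ) (hε : 0 < ε) :
    ∃ r₀ : ℕ, ∀ r : ℕ, r₀ ≤ r → Even r →
      ∃ (N : ℕ) (γ : ℝ), 0 < γ ∧
        ∀ k : ℕ, N ≤ k → ∀ (K : SimpleGraph (Fin k)) (R : Set (Sym2 (Fin k))),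
          R ⊆ K.edgeSet →
          (1 - γ) * (k.choose 2 : ℝ) ≤ K.edgeSet.ncard →
          ε * (k.choose 2 : ℝ) ≤ R.ncard →
          ε * (k.choose 2 : ℝ) ≤ (K.edgeSet \ R).ncard →
          ∃ s : Finset (Fin k), s.card = r ∧ K.IsClique ↑s ∧
            r ≤ {e ∈ R | ∀ v ∈ e, v ∈ s}.ncard ∧
            r ≤ {e ∈ K.edgeSet \ R | ∀ v ∈ e, v ∈ s}.ncard := by
  classical
  set ε' : ℝ := min ε 1 with hε'def
  have hε'pos : 0 < ε' := lt_min hε one_pos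
  have hε'le1 : ε' ≤ 1 := min_le_right _ _
  have hε'leε : ε' ≤ ε := min_le_left _ _
  set e3 : ℝ := ε'^3 with he3def
  have he3pos : 0 < e3 := by positivity
  have he3le1 : e3 ≤ 1 := by rw [he3def]; exact pow_le_one₀ hε'pos.le hε'le1
  refine ⟨⌈(2:ℝ)^40 / e3⌉₊, ?_⟩
  intro r hr _hrEven
  have hrR : (2:ℝ)^40 / e3 ≤ (r:ℝ) := le_trans (Nat.le_ceil _) (Nat.cast_le.2 hr)
  have hB1 : (2:ℝ)^40 ≤ e3 * r := by
    rw [div_le_iff₀ he3pos] at hrR; linarith [hrR]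
  have hrposR : (0:ℝ) < r := by nlinarith
  have hr24 : 24 ≤ r := by
    have : (24:ℝ) ≤ r := by nlinarith
    exact_mod_cast this
  refine ⟨max 4 ⌈(2:ℝ)^20 * ((r:ℝ)+1) / e3⌉₊, e3 / (2^40 * ((r:ℝ)+1)^2), by positivity, ?_⟩
  intro k hk K R hRsub hEdense hRcard hBcard
  set γ : ℝ := e3 / (2^40 * ((r:ℝ)+1)^2) with hγdef
  have hγpos : 0 < γ := by positivity
  have hγprod : γ * (2^40 * ((r:ℝ)+1)^2) = e3 := by
    rw [hγdef]; field_simp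
  have hk4 : 4 ≤ k := le_trans (le_max_left _ _) hk
  have hkceil : ⌈(2:ℝ)^20 * ((r:ℝ)+1) / e3⌉₊ ≤ k := le_trans (le_max_right _ _) hk
  have hB2 : (2:ℝ)^20 * ((r:ℝ)+1) ≤ e3 * k := by
    have h1 : (2:ℝ)^20 * ((r:ℝ)+1) / e3 ≤ (k:ℝ) := le_trans (Nat.le_ceil _) (Nat.cast_le.2 hkceil)
    rw [div_le_iff₀ he3pos] at h1; linarith
  have hk0 : (0:ℝ) < k := by
    have : (0:ℕ) < k := by omega
    exact_mod_cast this
  have hrk : (r:ℝ) + 1 ≤ k := by nlinarith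
  -- finsets for edge sets
  have hfinE : K.edgeSet.Finite := Set.toFinite _
  have hfinR : R.Finite := Set.toFinite _
  have hfinB : (K.edgeSet \ R).Finite := Set.toFinite _
  set EF : Finset (Sym2 (Fin k)) := hfinE.toFinset with hEFdef
  set RF : Finset (Sym2 (Fin k)) := hfinR.toFinset with hRFdef
  set BF : Finset (Sym2 (Fin k)) := hfinB.toFinset with hBFdef
  have hC2 : ((k.choose 2 : ℕ) : ℝ) = k*((k:ℝ)-1)/2 := Nat.cast_choose_two ℝ k
  have hEF : (1-γ)*((k:ℝ)*((k:ℝ)-1)/2) ≤ (EF.card : ℝ) := by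
    rw [← hC2, hEFdef, ← Set.ncard_eq_toFinset_card]; exact hEdense
  have hRF : ε'*((k:ℝ)*((k:ℝ)-1)/2) ≤ (RF.card : ℝ) := by
    rw [← hC2, hRFdef, ← Set.ncard_eq_toFinset_card]
    refine le_trans ?_ hRcard
    apply mul_le_mul_of_nonneg_right hε'leε
    positivity
  have hBF : ε'*((k:ℝ)*((k:ℝ)-1)/2) ≤ (BF.card : ℝ) := by
    rw [← hC2, hBFdef, ← Set.ncard_eq_toFinset_card]
    refine le_trans ?_ hBcard
    apply mul_le_mul_of_nonneg_right hε'leε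
    positivity
  -- non-neighborhoods
  set nnF : Fin k → Finset (Fin k) := fun v => univ.filter fun w => w ≠ v ∧ ¬ K.Adj v w with hnnFdef
  have hdegk : ∀ v : Fin k, K.degree v + 1 ≤ k := by
    intro v
    have := K.degree_lt_card_verts v
    rw [Fintype.card_fin] at this
    omega
  have hnncompl : ∀ v : Fin k, nnF v = (insert v (K.neighborFinset v))ᶜ := by
    intro v
    ext w
    simp only [hnnFdef, Finset.mem_filter, Finset.mem_univ, true_and, Finset.mem_compl,
      Finset.mem_insert, SimpleGraph.mem_neighborFinset, not_or]
  have hnncard : ∀ v : Fin k, (nnF v).card = k - (K.degree v + 1) := by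
    intro v
    rw [hnncompl v, Finset.card_compl, Fintype.card_fin,
      Finset.card_insert_of_notMem (fun h => K.irrefl ((SimpleGraph.mem_neighborFinset _ _ _).1 h))]
    rfl
  have hEFcard : K.edgeFinset.card = EF.card := by
    rw [← Set.ncard_coe_finset, SimpleGraph.coe_edgeFinset, hEFdef,
      ← Set.ncard_eq_toFinset_card]
  have hdegsum : ∑ v : Fin k, K.degree v = 2 * EF.card := by
    rw [← hEFcard]
    exact K.sum_degrees_eq_twice_card_edges
  have hdegsumR : (∑ v : Fin k, ((K.degree v : ℕ) : ℝ)) = 2 * (EF.card : ℝ) := by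
    rw [← Nat.cast_sum, hdegsum]; push_cast; ring
  have hnnR : ∀ v : Fin k, ((nnF v).card : ℝ) = (k:ℝ) - (K.degree v) - 1 := by
    intro v
    rw [hnncard v, Nat.cast_sub (hdegk v)]
    push_cast; ring
  have hnnsum : (∑ v : Fin k, ((nnF v).card : ℝ)) ≤ γ * (k:ℝ)^2 := by
    have h1 : (∑ v : Fin k, ((nnF v).card : ℝ)) = (k:ℝ)*(k:ℝ) - 2*(EF.card:ℝ) - (k:ℝ) := by
      calc (∑ v : Fin k, ((nnF v).card : ℝ))
          = ∑ v : Fin k, ((k:ℝ) - (K.degree v) - 1) := by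
            exact Finset.sum_congr rfl fun v _ => hnnR v
        _ = (∑ _v : Fin k, (k:ℝ)) - (∑ v : Fin k, ((K.degree v : ℕ):ℝ)) - (∑ _v : Fin k, (1:ℝ)) := by
            rw [← Finset.sum_sub_distrib, ← Finset.sum_sub_distrib]
        _ = (k:ℝ)*(k:ℝ) - 2*(EF.card:ℝ) - (k:ℝ) := by
            rw [hdegsumR, Finset.sum_const, Finset.sum_const, Finset.card_univ, Fintype.card_fin,
              nsmul_eq_mul, nsmul_eq_mul, mul_one]
    rw [h1]
    exact arith_nnsum hγpos.le hk0.le hEF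
  -- clean vertices
  set b : ℕ := ⌊e3 * k / (2^20 * (r:ℝ))⌋₊ with hbdef
  have hbR1 : (b:ℝ) ≤ e3 * k / (2^20 * (r:ℝ)) := Nat.floor_le (by positivity)
  have hbR2 : e3 * k / (2^20 * (r:ℝ)) < (b:ℝ)+1 := Nat.lt_floor_add_one _
  set Cl : Finset (Fin k) := univ.filter (fun v => (nnF v).card ≤ b) with hCldef
  set Dirty : Finset (Fin k) := univ.filter (fun v => ¬ ((nnF v).card ≤ b)) with hDirtydef
  have hCl : ∀ v ∈ Cl, (univ.filter fun w => w ≠ v ∧ ¬ K.Adj v w).card ≤ b := by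
    intro v hv
    rw [hCldef, Finset.mem_filter] at hv
    exact hv.2
  have hmemCl : ∀ v : Fin k, v ∉ Dirty → v ∈ Cl := by
    intro v hv
    rw [hDirtydef, Finset.mem_filter] at hv
    rw [hCldef, Finset.mem_filter]
    refine ⟨Finset.mem_univ _, ?_⟩
    by_contra hc
    exact hv ⟨Finset.mem_univ _, hc⟩
  have hDirtySum : (Dirty.card : ℝ) * ((b:ℝ)+1) ≤ γ * (k:ℝ)^2 := by
    have h1 : Dirty.card • (b+1) ≤ ∑ v ∈ Dirty, (nnF v).card := by
      apply Finset.card_nsmul_le_sum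
      intro v hv
      rw [hDirtydef, Finset.mem_filter] at hv
      omega
    have h2 : ∑ v ∈ Dirty, (nnF v).card ≤ ∑ v : Fin k, (nnF v).card :=
      Finset.sum_le_sum_of_subset (Finset.subset_univ _)
    rw [smul_eq_mul] at h1
    have h3 : ((Dirty.card * (b+1) : ℕ) : ℝ) ≤ ((∑ v : Fin k, (nnF v).card : ℕ) : ℝ) :=
      Nat.cast_le.2 (le_trans h1 h2)
    push_cast at h3
    linarith [h3, hnnsum]
  have hDpos : (0:ℝ) ≤ (Dirty.card : ℝ) := Nat.cast_nonneg _
  have hDirtyR : (Dirty.card : ℝ) * (2^20 * (r:ℝ)) ≤ k :=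
    arith_dirty hDpos hrposR he3pos hk0 hγprod hγpos.le hDirtySum hbR2.le
  have hD60 : (Dirty.card : ℝ) * 2^60 ≤ e3 * k := arith_D60 hDpos he3pos.le hDirtyR hB1
  have hγ40 : γ * 2^40 ≤ e3 := arith_g40 hγpos.le hrposR.le hγprod
  have hr1R : (1:ℝ) ≤ (r:ℝ) := by
    have : (1:ℕ) ≤ r := by omega
    exact_mod_cast this
  have hk4R : (4:ℝ) ≤ (k:ℝ) := by exact_mod_cast hk4
  have hbprod : (b:ℝ) * (2^20 * (r:ℝ)) ≤ e3 * k := by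
    have h1 := mul_le_mul_of_nonneg_right hbR1 (show (0:ℝ) ≤ 2^20 * (r:ℝ) by positivity)
    have h2 : e3 * k / (2^20 * (r:ℝ)) * (2^20 * (r:ℝ)) = e3 * k := by field_simp
    linarith [h1, h2.le, h2.symm.le]
  -- the Q bound
  have hQle : ((((univ : Finset (Fin k × Fin k)).filter fun p : Fin k × Fin k => ¬ K.Adj p.1 p.2).card : ℕ) : ℝ)
      ≤ (k:ℝ) + γ * (k:ℝ)^2 := by
    have hQsum : ((univ : Finset (Fin k × Fin k)).filter fun p : Fin k × Fin k => ¬ K.Adj p.1 p.2).card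
        = ∑ v : Fin k, (univ.filter fun w => ¬ K.Adj v w).card := by
      rw [Finset.card_filter, Fintype.sum_prod_type]
      exact Finset.sum_congr rfl fun v _ => (Finset.card_filter _ _).symm
    have hrow : ∀ v : Fin k, (univ.filter fun w => ¬ K.Adj v w).card = k - K.degree v := by
      intro v
      have : (univ.filter fun w => ¬ K.Adj v w) = (K.neighborFinset v)ᶜ := by
        ext w
        simp only [Finset.mem_filter, Finset.mem_univ, true_and, Finset.mem_compl,
          SimpleGraph.mem_neighborFinset]
      rw [this, Finset.card_compl, Fintype.card_fin]
      rfl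
    have hdegk' : ∀ v : Fin k, K.degree v ≤ k := fun v => by have := hdegk v; omega
    have hcast : ((∑ v : Fin k, (univ.filter fun w => ¬ K.Adj v w).card : ℕ) : ℝ)
        = (k:ℝ)*(k:ℝ) - 2*(EF.card:ℝ) := by
      rw [Nat.cast_sum]
      calc (∑ v : Fin k, ((univ.filter fun w => ¬ K.Adj v w).card : ℝ))
          = ∑ v : Fin k, ((k:ℝ) - (K.degree v)) := by
            refine Finset.sum_congr rfl fun v _ => ?_
            rw [hrow v, Nat.cast_sub (hdegk' v)]
        _ = (∑ _v : Fin k, (k:ℝ)) - (∑ v : Fin k, ((K.degree v : ℕ):ℝ)) := by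
            rw [← Finset.sum_sub_distrib]
        _ = (k:ℝ)*(k:ℝ) - 2*(EF.card:ℝ) := by
            rw [hdegsumR, Finset.sum_const, Finset.card_univ, Fintype.card_fin, nsmul_eq_mul]
    rw [hQsum, hcast]
    exact arith_Q hγpos.le hk0.le hEF
  -- find the red triple
  have hRedBig : (e3 * k / 2^10) * (k:ℝ)^3
      + 3*(k:ℝ)^2 * ((((univ : Finset (Fin k × Fin k)).filter fun p : Fin k × Fin k => ¬ K.Adj p.1 p.2).card : ℕ) : ℝ)
      + 3*(k:ℝ)^3 * (Dirty.card : ℝ)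
      < (2 * RF.card : ℝ)^3 / (k:ℝ)^2 := by
    exact arith_big hε'pos he3def he3le1 hk4R hr1R hγpos.le hB2 hγ40 hQle
      (Nat.cast_nonneg _) hDpos (arith_shrink hDpos hD60) hRF
  obtain ⟨va, vb, vc, hab, hac, hbc, haD, hbD, hcD, hTR⟩ :=
    find_triple K (by omega) RF (fun e he => (Set.Finite.mem_toFinset _).1 he |> hRsub)
      Dirty (e3 * k / 2^10) (by positivity) hRedBig
  set TR : Finset (Fin k) :=
    univ.filter (fun v => s(v,va) ∈ RF ∧ s(v,vb) ∈ RF ∧ s(v,vc) ∈ RF) with hTRdef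
  -- blue stage forbidden set
  set DF₂ : Finset (Fin k) := ((((Dirty ∪ nnF va) ∪ nnF vb) ∪ nnF vc) ∪ {va,vb,vc}) with hDF2def
  have hClnn : ∀ v, v ∈ Cl → (nnF v).card ≤ b := hCl
  have hDF2nat : DF₂.card ≤ Dirty.card + b + b + b + 3 := by
    have h3 : ({va,vb,vc} : Finset (Fin k)).card ≤ 3 := by
      refine le_trans (Finset.card_insert_le _ _) (Nat.succ_le_succ ?_)
      refine le_trans (Finset.card_insert_le _ _) (Nat.succ_le_succ ?_)
      simp
    have hna : (nnF va).card ≤ b := hClnn va (hmemCl _ haD)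
    have hnb : (nnF vb).card ≤ b := hClnn vb (hmemCl _ hbD)
    have hnc : (nnF vc).card ≤ b := hClnn vc (hmemCl _ hcD)
    calc DF₂.card ≤ ((((Dirty ∪ nnF va) ∪ nnF vb) ∪ nnF vc)).card + ({va,vb,vc} : Finset (Fin k)).card :=
          Finset.card_union_le _ _
      _ ≤ (((Dirty ∪ nnF va) ∪ nnF vb).card + (nnF vc).card) + ({va,vb,vc} : Finset (Fin k)).card :=
          Nat.add_le_add_right (Finset.card_union_le _ _) _
      _ ≤ (((Dirty ∪ nnF va).card + (nnF vb).card) + (nnF vc).card) + ({va,vb,vc} : Finset (Fin k)).card :=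
          Nat.add_le_add_right (Nat.add_le_add_right (Finset.card_union_le _ _) _) _
      _ ≤ (((Dirty.card + (nnF va).card) + (nnF vb).card) + (nnF vc).card) + ({va,vb,vc} : Finset (Fin k)).card :=
          Nat.add_le_add_right (Nat.add_le_add_right (Nat.add_le_add_right (Finset.card_union_le _ _) _) _) _
      _ ≤ Dirty.card + b + b + b + 3 := by omega
  have hDF2card : (DF₂.card : ℝ) ≤ (Dirty.card : ℝ) + 3*(b:ℝ) + 3 := by
    have := (Nat.cast_le (α := ℝ)).2 hDF2nat
    push_cast at this
    linarith
  have hBlueBig : (e3 * k / 2^10) * (k:ℝ)^3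
      + 3*(k:ℝ)^2 * ((((univ : Finset (Fin k × Fin k)).filter fun p : Fin k × Fin k => ¬ K.Adj p.1 p.2).card : ℕ) : ℝ)
      + 3*(k:ℝ)^3 * (DF₂.card : ℝ)
      < (2 * BF.card : ℝ)^3 / (k:ℝ)^2 := by
    exact arith_big hε'pos he3def he3le1 hk4R hr1R hγpos.le hB2 hγ40 hQle
      (Nat.cast_nonneg _) (Nat.cast_nonneg _)
      (arith_DF2 hDpos (Nat.cast_nonneg b) hD60 hbprod hr1R hB2 hDF2card) hBF
  obtain ⟨wa, wb, wc, hab', hac', hbc', haD', hbD', hcD', hTB⟩ :=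
    find_triple K (by omega) BF (fun e he => ((Set.Finite.mem_toFinset _).1 he).1)
      DF₂ (e3 * k / 2^10) (by positivity) hBlueBig
  set TB : Finset (Fin k) :=
    univ.filter (fun v => s(v,wa) ∈ BF ∧ s(v,wb) ∈ BF ∧ s(v,wc) ∈ BF) with hTBdef
  -- unpack blue triple non-membership
  have hsplit : ∀ x : Fin k, x ∉ DF₂ →
      x ∉ Dirty ∧ x ∉ nnF va ∧ x ∉ nnF vb ∧ x ∉ nnF vc ∧ x ≠ va ∧ x ≠ vb ∧ x ≠ vc := by
    intro x hx
    rw [hDF2def] at hx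
    simp only [Finset.mem_union, Finset.mem_insert, Finset.mem_singleton, not_or] at hx
    tauto
  obtain ⟨haDir', hanna, hannb, hannc, hane_a, hane_b, hane_c⟩ := hsplit wa haD'
  obtain ⟨hbDir', hbnna, hbnnb, hbnnc, hbne_a, hbne_b, hbne_c⟩ := hsplit wb hbD'
  obtain ⟨hcDir', hcnna, hcnnb, hcnnc, hcne_a, hcne_b, hcne_c⟩ := hsplit wc hcD'
  have hadj_of_nn : ∀ x y : Fin k, y ∉ nnF x → y ≠ x → K.Adj x y := by
    intro x y h hne
    rw [hnnFdef] at h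
    simp only [Finset.mem_filter, Finset.mem_univ, true_and, not_and, not_not] at h
    exact h hne
  have hAaa : K.Adj va wa := hadj_of_nn va wa hanna hane_a
  have hAba : K.Adj vb wa := hadj_of_nn vb wa hannb hane_b
  have hAca : K.Adj vc wa := hadj_of_nn vc wa hannc hane_c
  have hAab : K.Adj va wb := hadj_of_nn va wb hbnna hbne_a
  have hAbb : K.Adj vb wb := hadj_of_nn vb wb hbnnb hbne_b
  have hAcb : K.Adj vc wb := hadj_of_nn vc wb hbnnc hbne_c
  have hAac : K.Adj va wc := hadj_of_nn va wc hcnna hcne_a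
  have hAbc : K.Adj vb wc := hadj_of_nn vb wc hcnnb hcne_b
  have hAcc : K.Adj vc wc := hadj_of_nn vc wc hcnnc hcne_c
  -- the base clique
  set s₀ : Finset (Fin k) := {va, vb, vc, wa, wb, wc} with hs0def
  have hs0card : s₀.card = 6 := by
    rw [hs0def]
    rw [Finset.card_insert_of_notMem (by
      simp only [Finset.mem_insert, Finset.mem_singleton, not_or]
      exact ⟨hab.ne, hac.ne, fun h => (h ▸ hane_a) rfl, fun h => (h ▸ hbne_a) rfl,
        fun h => (h ▸ hcne_a) rfl⟩)]
    rw [Finset.card_insert_of_notMem (by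
      simp only [Finset.mem_insert, Finset.mem_singleton, not_or]
      exact ⟨hbc.ne, fun h => (h ▸ hane_b) rfl, fun h => (h ▸ hbne_b) rfl,
        fun h => (h ▸ hcne_b) rfl⟩)]
    rw [Finset.card_insert_of_notMem (by
      simp only [Finset.mem_insert, Finset.mem_singleton, not_or]
      exact ⟨fun h => (h ▸ hane_c) rfl, fun h => (h ▸ hbne_c) rfl, fun h => (h ▸ hcne_c) rfl⟩)]
    rw [Finset.card_insert_of_notMem (by
      simp only [Finset.mem_insert, Finset.mem_singleton, not_or]
      exact ⟨hab'.ne, hac'.ne⟩)]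
    rw [Finset.card_insert_of_notMem (by
      simp only [Finset.mem_singleton]
      exact hbc'.ne)]
    simp
  have hs0clique : K.IsClique ↑s₀ := by
    rw [SimpleGraph.isClique_iff]
    intro x hx y hy hxy
    rw [hs0def] at hx hy
    simp only [Finset.coe_insert, Set.mem_insert_iff, Finset.coe_singleton,
      Set.mem_singleton_iff] at hx hy
    rcases hx with rfl|rfl|rfl|rfl|rfl|rfl <;> rcases hy with rfl|rfl|rfl|rfl|rfl|rfl <;>
      first
        | exact absurd rfl hxy
        | exact hab | exact hab.symm | exact hac | exact hac.symm
        | exact hbc | exact hbc.symm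
        | exact hab' | exact hab'.symm | exact hac' | exact hac'.symm
        | exact hbc' | exact hbc'.symm
        | exact hAaa | exact hAaa.symm | exact hAba | exact hAba.symm
        | exact hAca | exact hAca.symm | exact hAab | exact hAab.symm
        | exact hAbb | exact hAbb.symm | exact hAcb | exact hAcb.symm
        | exact hAac | exact hAac.symm | exact hAbc | exact hAbc.symm
        | exact hAcc | exact hAcc.symm
  have hs0Cl : s₀ ⊆ Cl := by
    rw [hs0def]
    intro x hx
    simp only [Finset.mem_insert, Finset.mem_singleton] at hx
    rcases hx with rfl|rfl|rfl|rfl|rfl|rfl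
    · exact hmemCl _ haD
    · exact hmemCl _ hbD
    · exact hmemCl _ hcD
    · exact hmemCl _ haDir'
    · exact hmemCl _ hbDir'
    · exact hmemCl _ hcDir'
  -- greedy extension
  set t' : ℕ := r / 3 + 1 with ht'def
  set pad : ℕ := r - (6 + 2 * t') with hpaddef
  have h2t6 : 6 + 2*t' ≤ r := by omega
  have h3t : r ≤ 3 * t' := by omega
  set P₁ : Finset (Fin k) := TR ∩ Cl with hP1def
  set P₂ : Finset (Fin k) := TB ∩ Cl with hP2def
  have hsubTR : ∀ (T : Finset (Fin k)), T.card ≤ (T ∩ Cl).card + Dirty.card := by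
    intro T
    have hsub : T ⊆ (T ∩ Cl) ∪ Dirty := by
      intro v hv
      by_cases hvc : v ∈ Cl
      · exact Finset.mem_union_left _ (Finset.mem_inter.2 ⟨hv, hvc⟩)
      · refine Finset.mem_union_right _ ?_
        rw [hCldef, Finset.mem_filter] at hvc
        simp only [Finset.mem_univ, true_and] at hvc
        rw [hDirtydef, Finset.mem_filter]
        exact ⟨Finset.mem_univ _, hvc⟩
    exact le_trans (Finset.card_le_card hsub) (Finset.card_union_le _ _)
  have hpoolnat : r * (b+1) + r ≤ P₁.card ∧ r * (b+1) + r ≤ P₂.card ∧ r * (b+1) + r ≤ Cl.card := by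
    have hTP1 : ((TR.card : ℕ) : ℝ) ≤ (P₁.card : ℝ) + (Dirty.card : ℝ) := by
      have := (Nat.cast_le (α := ℝ)).2 (hsubTR TR)
      push_cast at this
      rw [hP1def]
      linarith
    have hTP2 : ((TB.card : ℕ) : ℝ) ≤ (P₂.card : ℝ) + (Dirty.card : ℝ) := by
      have := (Nat.cast_le (α := ℝ)).2 (hsubTR TB)
      push_cast at this
      rw [hP2def]
      linarith
    have hTP3 : (k : ℝ) ≤ (Cl.card : ℝ) + (Dirty.card : ℝ) := by
      have h := Finset.card_filter_add_card_filter_not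
        (s := (univ : Finset (Fin k))) (p := fun v => (nnF v).card ≤ b)
      rw [Finset.card_univ, Fintype.card_fin] at h
      have h2 : Cl.card + Dirty.card = k := by rw [hCldef, hDirtydef]; exact h
      have := (Nat.cast_le (α := ℝ)).2 h2.ge
      push_cast at this
      linarith
    have hb0R : (0:ℝ) ≤ (b:ℝ) := Nat.cast_nonneg _
    refine ⟨?_, ?_, ?_⟩
    · have hR : ((r * (b+1) + r : ℕ) : ℝ) ≤ (P₁.card : ℝ) := by
        push_cast
        exact arith_pool he3pos he3le1 hk0 hr1R hb0R hDpos hB2 hbprod hD60 hTR hTP1 le_rfl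
      exact_mod_cast hR
    · have hR : ((r * (b+1) + r : ℕ) : ℝ) ≤ (P₂.card : ℝ) := by
        push_cast
        exact arith_pool he3pos he3le1 hk0 hr1R hb0R hDpos hB2 hbprod hD60 hTB hTP2 le_rfl
      exact_mod_cast hR
    · have hR : ((r * (b+1) + r : ℕ) : ℝ) ≤ (Cl.card : ℝ) := by
        push_cast
        exact arith_pool3 he3pos he3le1 hk0 hr1R hb0R hDpos hB2 hbprod hD60 hTP3 le_rfl
      exact_mod_cast hR
  have hnum1 : (6 + t') * (b+1) + t' ≤ P₁.card := by
    refine le_trans ?_ hpoolnat.1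
    have h1 : 6 + t' ≤ r := by omega
    have h2 : t' ≤ r := by omega
    exact Nat.add_le_add (Nat.mul_le_mul_right _ h1) h2
  have hnum2 : ((6 + t') + t') * (b+1) + t' ≤ P₂.card := by
    refine le_trans ?_ hpoolnat.2.1
    have h1 : (6 + t') + t' ≤ r := by omega
    have h2 : t' ≤ r := by omega
    exact Nat.add_le_add (Nat.mul_le_mul_right _ h1) h2
  have hnum3 : (((6 + t') + t') + pad) * (b+1) + pad ≤ Cl.card := by
    refine le_trans ?_ hpoolnat.2.2
    have h1 : ((6 + t') + t') + pad = r := by omega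
    rw [h1]
    omega
  obtain ⟨s₁, hs01, hs1card, hs1cl, hs1Cl, hs1P⟩ :=
    greedy_extend K b Cl hCl t' s₀ P₁ hs0Cl Finset.inter_subset_right hs0clique
      (by rw [hs0card]; exact hnum1)
  obtain ⟨s₂, hs12, hs2card, hs2cl, hs2Cl, hs2P⟩ :=
    greedy_extend K b Cl hCl t' s₁ P₂ hs1Cl Finset.inter_subset_right hs1cl
      (by rw [hs1card, hs0card]; exact hnum2)
  obtain ⟨s₃, hs23, hs3card, hs3cl, hs3Cl, hs3P⟩ :=
    greedy_extend K b Cl hCl pad s₂ Cl hs2Cl (Finset.Subset.refl _) hs2cl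
      (by rw [hs2card, hs1card, hs0card]; exact hnum3)
  have hs3cardr : s₃.card = r := by
    rw [hs3card, hs2card, hs1card, hs0card]; omega
  have hs03 : s₀ ⊆ s₃ := Finset.Subset.trans hs01 (Finset.Subset.trans hs12 hs23)
  refine ⟨s₃, hs3cardr, hs3cl, ?_, ?_⟩
  · -- red edges
    have hUcard : (s₁ \ s₀).card = t' := by
      rw [Finset.card_sdiff_of_subset hs01, hs1card, hs0card]; omega
    have habc_card : ({va,vb,vc} : Finset (Fin k)).card = 3 := by
      rw [Finset.card_insert_of_notMem (by simp [hab.ne, hac.ne]),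
        Finset.card_insert_of_notMem (by simp [hbc.ne]), Finset.card_singleton]
    have habc_sub : ({va,vb,vc} : Finset (Fin k)) ⊆ s₀ := by
      rw [hs0def]; intro x hx
      simp only [Finset.mem_insert, Finset.mem_singleton] at hx ⊢; tauto
    have hdisj : ∀ x ∈ ({va,vb,vc} : Finset (Fin k)), x ∉ s₁ \ s₀ := by
      intro x hx hxU
      exact (Finset.mem_sdiff.1 hxU).2 (habc_sub hx)
    set FR : Finset (Sym2 (Fin k)) :=
      ((({va,vb,vc} : Finset (Fin k)) ×ˢ (s₁ \ s₀)).image (fun p => s(p.2, p.1))) with hFRdef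
    have hFRcard : FR.card = 3 * t' := by
      rw [hFRdef, Finset.card_image_of_injOn, Finset.card_product, habc_card, hUcard]
      intro p hp q hq hpq
      simp only [Finset.mem_coe, Finset.mem_product] at hp hq
      rcases Sym2.eq_iff.1 hpq with ⟨h1, h2⟩ | ⟨h1, h2⟩
      · exact Prod.ext h2 h1
      · exact absurd (h1 ▸ hp.2) (fun hc => hdisj q.1 hq.1 hc)
    have hsubR : ↑FR ⊆ {e ∈ R | ∀ v ∈ e, v ∈ s₃} := by
      intro e he
      simp only [hFRdef, Finset.coe_image, Set.mem_image, Finset.mem_coe,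
        Finset.mem_product] at he
      obtain ⟨p, ⟨hp1, hp2⟩, rfl⟩ := he
      have hTRmem : p.2 ∈ TR := by
        have h1 : p.2 ∈ P₁ := hs1P hp2
        rw [hP1def, Finset.mem_inter] at h1
        exact h1.1
      rw [hTRdef, Finset.mem_filter] at hTRmem
      obtain ⟨-, hma, hmb, hmc⟩ := hTRmem
      have hp1' : p.1 = va ∨ p.1 = vb ∨ p.1 = vc := by
        simpa only [Finset.mem_insert, Finset.mem_singleton] using hp1
      constructor
      · rcases hp1' with h | h | h <;> rw [h]
        · exact (Set.Finite.mem_toFinset _).1 hma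
        · exact (Set.Finite.mem_toFinset _).1 hmb
        · exact (Set.Finite.mem_toFinset _).1 hmc
      · intro v hv
        rw [Sym2.mem_iff] at hv
        rcases hv with rfl | rfl
        · exact hs23 (hs12 ((Finset.mem_sdiff.1 hp2).1))
        · exact hs03 (habc_sub hp1)
    calc r ≤ 3 * t' := h3t
      _ = FR.card := hFRcard.symm
      _ = (↑FR : Set (Sym2 (Fin k))).ncard := (Set.ncard_coe_finset _).symm
      _ ≤ _ := Set.ncard_le_ncard hsubR (Set.toFinite _)
  · -- blue edges
    have hUcard : (s₂ \ s₁).card = t' := by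
      rw [Finset.card_sdiff_of_subset hs12, hs2card, hs1card]; omega
    have habc_card : ({wa,wb,wc} : Finset (Fin k)).card = 3 := by
      rw [Finset.card_insert_of_notMem (by simp [hab'.ne, hac'.ne]),
        Finset.card_insert_of_notMem (by simp [hbc'.ne]), Finset.card_singleton]
    have habc_sub : ({wa,wb,wc} : Finset (Fin k)) ⊆ s₀ := by
      rw [hs0def]; intro x hx
      simp only [Finset.mem_insert, Finset.mem_singleton] at hx ⊢; tauto
    have hdisj : ∀ x ∈ ({wa,wb,wc} : Finset (Fin k)), x ∉ s₂ \ s₁ := by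
      intro x hx hxU
      exact (Finset.mem_sdiff.1 hxU).2 (hs01 (habc_sub hx))
    set FB : Finset (Sym2 (Fin k)) :=
      ((({wa,wb,wc} : Finset (Fin k)) ×ˢ (s₂ \ s₁)).image (fun p => s(p.2, p.1))) with hFBdef
    have hFBcard : FB.card = 3 * t' := by
      rw [hFBdef, Finset.card_image_of_injOn, Finset.card_product, habc_card, hUcard]
      intro p hp q hq hpq
      simp only [Finset.mem_coe, Finset.mem_product] at hp hq
      rcases Sym2.eq_iff.1 hpq with ⟨h1, h2⟩ | ⟨h1, h2⟩
      · exact Prod.ext h2 h1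
      · exact absurd (h1 ▸ hp.2) (fun hc => hdisj q.1 hq.1 hc)
    have hsubB : ↑FB ⊆ {e ∈ K.edgeSet \ R | ∀ v ∈ e, v ∈ s₃} := by
      intro e he
      simp only [hFBdef, Finset.coe_image, Set.mem_image, Finset.mem_coe,
        Finset.mem_product] at he
      obtain ⟨p, ⟨hp1, hp2⟩, rfl⟩ := he
      have hTBmem : p.2 ∈ TB := by
        have h1 : p.2 ∈ P₂ := hs2P hp2
        rw [hP2def, Finset.mem_inter] at h1
        exact h1.1
      rw [hTBdef, Finset.mem_filter] at hTBmem
      obtain ⟨-, hma, hmb, hmc⟩ := hTBmem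
      have hp1' : p.1 = wa ∨ p.1 = wb ∨ p.1 = wc := by
        simpa only [Finset.mem_insert, Finset.mem_singleton] using hp1
      constructor
      · rcases hp1' with h | h | h <;> rw [h]
        · exact (Set.Finite.mem_toFinset _).1 hma
        · exact (Set.Finite.mem_toFinset _).1 hmb
        · exact (Set.Finite.mem_toFinset _).1 hmc
      · intro v hv
        rw [Sym2.mem_iff] at hv
        rcases hv with rfl | rfl
        · exact hs23 ((Finset.mem_sdiff.1 hp2).1)
        · exact hs03 (habc_sub hp1)
    calc r ≤ 3 * t' := h3t
      _ = FB.card := hFBcard.symm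
      _ = (↑FB : Set (Sym2 (Fin k))).ncard := (Set.ncard_coe_finset _).symm
      _ ≤ _ := Set.ncard_le_ncard hsubB (Set.toFinite _)
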